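/- arXiv:1404.2228 — 3 statements merged into one kernel-verified Lean document; each statement's English description precedes it below -/
import Mathlib

section
/- The function f_1(z) = (λ + μ + α)z − λz·β(z) − μ has exactly one zero in the open unit disk, where β(z) is a probability generating function of a positive-integer-valued random variable. -/
open Set

/-- `(n+1) x^n (1-x) ≤ 1 - x^(n+1)` for `0 ≤ x ≤ 1`. -/
lemma aux_pow_chord (x : ℝ) (hx0 : 0 ≤ x) (hx1 : x ≤ 1) (n : ℕ) :
    ((n : ℝ) + 1) * x ^ n * (1 - x) ≤ 1 - x ^ (n + 1) := by
  induction n with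
  | zero => simp
  | succ n ih =>
    have hpow1 : x ^ (n + 1) ≤ 1 := pow_le_one₀ hx0 hx1
    have h2 : (((n : ℝ) + 1) * x ^ n * (1 - x)) * x ≤ (1 - x ^ (n + 1)) * x :=
      mul_le_mul_of_nonneg_right ih hx0
    have m : 0 ≤ (1 - x ^ (n + 1)) * (1 - x) :=
      mul_nonneg (by linarith) (by linarith)
    simp only [pow_succ] at *
    push_cast
    nlinarith [h2, m]

/-- `‖z^(n+1) - w^(n+1)‖ ≤ (n+1) r^n ‖z - w‖` when `‖z‖, ‖w‖ ≤ r`. -/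
lemma aux_norm_pow_sub (z w : ℂ) (r : ℝ) (hz : ‖z‖ ≤ r) (hw : ‖w‖ ≤ r) (n : ℕ) :
    ‖z ^ (n + 1) - w ^ (n + 1)‖ ≤ ((n : ℝ) + 1) * r ^ n * ‖z - w‖ := by
  have hr : 0 ≤ r := (norm_nonneg z).trans hz
  induction n with
  | zero => simp
  | succ n ih =>
    have key : z ^ (n + 2) - w ^ (n + 2) = z * (z ^ (n + 1) - w ^ (n + 1)) + (z - w) * w ^ (n + 1) := by
      ring
    calc ‖z ^ (n + 1 + 1) - w ^ (n + 1 + 1)‖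
        = ‖z * (z ^ (n + 1) - w ^ (n + 1)) + (z - w) * w ^ (n + 1)‖ := by rw [key]
      _ ≤ ‖z * (z ^ (n + 1) - w ^ (n + 1))‖ + ‖(z - w) * w ^ (n + 1)‖ := norm_add_le _ _
      _ = ‖z‖ * ‖z ^ (n + 1) - w ^ (n + 1)‖ + ‖z - w‖ * ‖w‖ ^ (n + 1) := by
          rw [norm_mul, norm_mul, norm_pow]
      _ ≤ r * (((n : ℝ) + 1) * r ^ n * ‖z - w‖) + ‖z - w‖ * r ^ (n + 1) := by
          gcongr <;> positivity
      _ = ((n : ℝ) + 1 + 1) * r ^ (n + 1) * ‖z - w‖ := by ring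
      _ = ((n + 1 : ℕ) + 1 : ℝ) * r ^ (n + 1) * ‖z - w‖ := by push_cast; ring

/-- The function `f₁(z) = (λ + μ + α)z − λ·z·β(z) − μ`, where `β` is the probability
generating function of a positive-integer-valued random variable, has exactly one zero
in the open unit disk. -/
theorem stmt_0 (lam mu alpha : ℝ) (hlam : 0 < lam) (hmu : 0 < mu) (halpha : 0 < alpha)
    (b : ℕ → ℝ) (hb : ∀ i, 0 ≤ b i) (hb0 : b 0 = 0) (hbsummable : Summable b)
    (hbsum : ∑' i, b i = 1) :
    ∃! z : ℂ, ‖z‖ < 1 ∧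
      (lam + mu + alpha) * z - lam * z * (∑' i : ℕ, (b i : ℂ) * z ^ i) - mu = 0 := by
  classical
  -- each coefficient is at most 1
  have hb1 : ∀ i, b i ≤ 1 := by
    intro i
    have := Summable.le_tsum hbsummable i (fun j _ => hb j)
    simpa [hbsum] using this
  -- the real series S x = ∑ b i x^(i+1)
  set S : ℝ → ℝ := fun x => ∑' i, b i * x ^ (i + 1) with hS
  have hSsum : ∀ x : ℝ, |x| ≤ 1 → Summable fun i => b i * x ^ (i + 1) := by
    intro x hx
    apply Summable.of_norm_bounded hbsummable
    intro i
    rw [norm_mul, norm_pow, Real.norm_eq_abs, Real.norm_eq_abs, abs_of_nonneg (hb i)]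
    calc b i * |x| ^ (i + 1) ≤ b i * 1 := by
          apply mul_le_mul_of_nonneg_left _ (hb i)
          exact pow_le_one₀ (abs_nonneg x) hx
      _ = b i := mul_one _
  have hS0 : S 0 = 0 := by simp [hS]
  have hS1 : S 1 = 1 := by simp [hS, hbsum]
  -- continuity of S on [0,1]
  have hScont : ContinuousOn S (Icc (0 : ℝ) 1) := by
    apply continuousOn_tsum (u := b)
      (fun i => (continuousOn_const.mul (continuous_pow (i + 1)).continuousOn))
      hbsummable
    intro n x hx
    show ‖b n * x ^ (n + 1)‖ ≤ b n
    rw [norm_mul, norm_pow, Real.norm_eq_abs, Real.norm_eq_abs,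
      abs_of_nonneg (hb n)]
    have hx1 : |x| ≤ 1 := abs_le.2 ⟨by linarith [hx.1], hx.2⟩
    calc b n * |x| ^ (n + 1) ≤ b n * 1 := by
          apply mul_le_mul_of_nonneg_left _ (hb n)
          exact pow_le_one₀ (abs_nonneg x) hx1
      _ = b n := mul_one _
  -- φ x = lam * S x + mu - (lam+mu+alpha) x  is continuous; IVT gives a fixed point xs
  set φ : ℝ → ℝ := fun x => lam * S x + mu - (lam + mu + alpha) * x with hφ
  have hφcont : ContinuousOn φ (Icc (0 : ℝ) 1) := by
    apply ContinuousOn.sub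
    · exact (continuousOn_const.mul hScont).add continuousOn_const
    · exact (continuousOn_const.mul continuousOn_id)
  have hφ0 : φ 0 = mu := by simp [hφ, hS0]
  have hφ1 : φ 1 = -alpha := by
    show lam * S 1 + mu - (lam + mu + alpha) * 1 = -alpha
    rw [hS1]; ring
  obtain ⟨xs, hxsIcc, hxsfix⟩ : ∃ x ∈ Icc (0 : ℝ) 1, φ x = 0 := by
    have h := intermediate_value_Icc' (by norm_num : (0:ℝ) ≤ 1) hφcont
    have h0 : (0 : ℝ) ∈ Icc (φ 1) (φ 0) := by
      rw [hφ0, hφ1]; constructor <;> linarith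
    obtain ⟨x, hx, hfx⟩ := h h0
    exact ⟨x, hx, hfx⟩
  have hxs0 : 0 ≤ xs := hxsIcc.1
  have hxs1 : xs < 1 := by
    rcases lt_or_eq_of_le hxsIcc.2 with h | h
    · exact h
    · exfalso; rw [h] at hxsfix; rw [hφ1] at hxsfix; linarith
  have hxsabs : |xs| ≤ 1 := by rw [abs_of_nonneg hxs0]; linarith
  -- the fixed point equation
  have hfix : lam * S xs + mu = (lam + mu + alpha) * xs := by
    have h := hxsfix
    simp only [hφ] at h
    linarith
  have hxspos : 0 < xs := by
    have hSnn : 0 ≤ S xs := by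
      apply tsum_nonneg
      intro i
      exact mul_nonneg (hb i) (pow_nonneg hxs0 _)
    nlinarith [mul_nonneg hlam.le hSnn]
  -- summability of the derivative-type series
  have hDsummand_nonneg : ∀ i : ℕ, 0 ≤ b i * (((i : ℝ) + 1) * xs ^ i) := by
    intro i
    exact mul_nonneg (hb i) (mul_nonneg (by positivity) (pow_nonneg hxs0 _))
  have haux : Summable fun i : ℕ => ((i : ℝ) + 1) * xs ^ i := by
    have h1 : Summable fun i : ℕ => (i : ℝ) ^ 1 * xs ^ i := by
      apply summable_pow_mul_geometric_of_norm_lt_one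
      rw [Real.norm_eq_abs, abs_of_nonneg hxs0]; exact hxs1
    have h2 : Summable fun i : ℕ => xs ^ i :=
      summable_geometric_of_lt_one hxs0 hxs1
    have := h1.add h2
    apply this.congr
    intro i; simp; ring
  have hDsum : Summable fun i : ℕ => b i * (((i : ℝ) + 1) * xs ^ i) := by
    apply Summable.of_nonneg_of_le hDsummand_nonneg _ haux
    intro i
    apply mul_le_of_le_one_left (mul_nonneg (by positivity) (pow_nonneg hxs0 _)) (hb1 i)
  set D : ℝ := ∑' i, b i * (((i : ℝ) + 1) * xs ^ i) with hD
  -- key strict inequality: lam * D < lam + mu + alpha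
  have hkey : lam * D < lam + mu + alpha := by
    have hchord : (1 - xs) * D ≤ 1 - S xs := by
      have hls : ∑' i, (1 - xs) * (b i * (((i : ℝ) + 1) * xs ^ i)) = (1 - xs) * D := by
        rw [tsum_mul_left]
      have hrs : ∑' i, (b i - b i * xs ^ (i + 1)) = 1 - S xs := by
        rw [Summable.tsum_sub hbsummable (hSsum xs hxsabs), hbsum]
      rw [← hls, ← hrs]
      apply Summable.tsum_le_tsum _ (hDsum.mul_left _) (hbsummable.sub (hSsum xs hxsabs))
      intro i
      have := aux_pow_chord xs hxs0 (le_of_lt hxs1) i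
      have h2 : b i * (((i : ℝ) + 1) * xs ^ i * (1 - xs)) ≤ b i * (1 - xs ^ (i + 1)) :=
        mul_le_mul_of_nonneg_left this (hb i)
      calc (1 - xs) * (b i * (((i : ℝ) + 1) * xs ^ i))
          = b i * (((i : ℝ) + 1) * xs ^ i * (1 - xs)) := by ring
        _ ≤ b i * (1 - xs ^ (i + 1)) := h2
        _ = b i - b i * xs ^ (i + 1) := by ring
    -- lam * (1 - S xs) = lam + mu - (lam+mu+alpha) * xs
    have h3 : lam * (1 - S xs) = lam + mu - (lam + mu + alpha) * xs := by linarith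
    have h4 : lam + mu - (lam + mu + alpha) * xs < (lam + mu + alpha) * (1 - xs) := by
      nlinarith
    have h5 : lam * ((1 - xs) * D) ≤ lam * (1 - S xs) :=
      mul_le_mul_of_nonneg_left hchord hlam.le
    have h6 : lam * ((1 - xs) * D) < (lam + mu + alpha) * (1 - xs) := by linarith
    have h7 : 0 < 1 - xs := by linarith
    nlinarith
  -- complex summability in the closed unit disk
  have hzsum : ∀ z : ℂ, ‖z‖ ≤ 1 → Summable fun i => (b i : ℂ) * z ^ i := by
    intro z hz
    apply Summable.of_norm_bounded hbsummable
    intro i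
    rw [norm_mul, norm_pow, Complex.norm_real, Real.norm_eq_abs, abs_of_nonneg (hb i)]
    calc b i * ‖z‖ ^ i ≤ b i * 1 := by
          apply mul_le_mul_of_nonneg_left _ (hb i)
          exact pow_le_one₀ (norm_nonneg z) hz
      _ = b i := mul_one _
  have hzsum' : ∀ z : ℂ, ‖z‖ ≤ 1 → Summable fun i => (b i : ℂ) * z ^ (i + 1) := by
    intro z hz
    have := (hzsum z hz).mul_left z
    apply this.congr
    intro i
    rw [pow_succ]
    ring
  -- rewriting the zero equation
  have hrw : ∀ z : ℂ, ‖z‖ ≤ 1 →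
      lam * z * (∑' i : ℕ, (b i : ℂ) * z ^ i) = lam * ∑' i : ℕ, (b i : ℂ) * z ^ (i + 1) := by
    intro z hz
    have h1 : z * (∑' i : ℕ, (b i : ℂ) * z ^ i) = ∑' i : ℕ, z * ((b i : ℂ) * z ^ i) :=
      (tsum_mul_left).symm
    have h2 : ∑' i : ℕ, z * ((b i : ℂ) * z ^ i) = ∑' i : ℕ, (b i : ℂ) * z ^ (i + 1) := by
      apply tsum_congr
      intro i
      rw [pow_succ]
      ring
    calc lam * z * (∑' i : ℕ, (b i : ℂ) * z ^ i)
        = lam * (z * (∑' i : ℕ, (b i : ℂ) * z ^ i)) := by ring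
      _ = lam * ∑' i : ℕ, (b i : ℂ) * z ^ (i + 1) := by rw [h1, h2]
  -- zero equation in convenient form
  have heqform : ∀ z : ℂ, ‖z‖ < 1 →
      ((lam + mu + alpha) * z - lam * z * (∑' i : ℕ, (b i : ℂ) * z ^ i) - mu = 0 ↔
        (lam + mu + alpha) * z = lam * (∑' i : ℕ, (b i : ℂ) * z ^ (i + 1)) + mu) := by
    intro z hz
    rw [hrw z hz.le]
    constructor <;> intro h <;> linear_combination h
  -- norm bound of the complex series by S
  have hnormS : ∀ z : ℂ, ‖z‖ ≤ 1 → ‖∑' i : ℕ, (b i : ℂ) * z ^ (i + 1)‖ ≤ S ‖z‖ := by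
    intro z hz
    have h1 : ‖∑' i : ℕ, (b i : ℂ) * z ^ (i + 1)‖ ≤ ∑' i : ℕ, ‖(b i : ℂ) * z ^ (i + 1)‖ := by
      apply norm_tsum_le_tsum_norm
      apply Summable.of_nonneg_of_le (fun i => norm_nonneg _) _ (hSsum ‖z‖ (by rwa [abs_of_nonneg (norm_nonneg z)]))
      intro i
      rw [norm_mul, norm_pow, Complex.norm_real, Real.norm_eq_abs, abs_of_nonneg (hb i)]
    have h2 : ∑' i : ℕ, ‖(b i : ℂ) * z ^ (i + 1)‖ = S ‖z‖ := by
      apply tsum_congr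
      intro i
      rw [norm_mul, norm_pow, Complex.norm_real, Real.norm_eq_abs, abs_of_nonneg (hb i)]
    rw [h2] at h1; exact h1
  -- any zero in the open disk has norm at most xs
  have hnormle : ∀ z : ℂ, ‖z‖ < 1 →
      (lam + mu + alpha) * z = lam * (∑' i : ℕ, (b i : ℂ) * z ^ (i + 1)) + mu → ‖z‖ ≤ xs := by
    intro z hz heq
    by_contra hgt
    push_neg at hgt
    set x : ℝ := ‖z‖ with hx
    have hx0 : 0 ≤ x := norm_nonneg z
    have hxabs : |x| ≤ 1 := by rw [abs_of_nonneg hx0]; exact hz.le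
    -- φ x ≥ 0 from the equation
    have hφx : 0 ≤ lam * S x + mu - (lam + mu + alpha) * x := by
      have h1 : ‖(lam + mu + alpha) * z‖ = (lam + mu + alpha) * x := by
        rw [norm_mul]
        have : ‖((lam : ℂ) + mu + alpha)‖ = lam + mu + alpha := by
          rw [show ((lam : ℂ) + mu + alpha) = ((lam + mu + alpha : ℝ) : ℂ) by push_cast; ring,
            Complex.norm_real, Real.norm_eq_abs, abs_of_pos (by linarith)]
        rw [this]
      have h2 : ‖(lam : ℂ) * (∑' i : ℕ, (b i : ℂ) * z ^ (i + 1)) + mu‖ ≤ lam * S x + mu := by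
        calc ‖(lam : ℂ) * (∑' i : ℕ, (b i : ℂ) * z ^ (i + 1)) + mu‖
            ≤ ‖(lam : ℂ) * (∑' i : ℕ, (b i : ℂ) * z ^ (i + 1))‖ + ‖(mu : ℂ)‖ := norm_add_le _ _
          _ = lam * ‖∑' i : ℕ, (b i : ℂ) * z ^ (i + 1)‖ + mu := by
              rw [norm_mul, Complex.norm_real, Real.norm_eq_abs, abs_of_pos hlam,
                Complex.norm_real, Real.norm_eq_abs, abs_of_pos hmu]
          _ ≤ lam * S x + mu := by
              have := hnormS z hz.le
              nlinarith [mul_le_mul_of_nonneg_left this hlam.le]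
      rw [heq] at h1
      linarith
    -- convexity: S x ≤ (1-t) S xs + t with t = (x - xs)/(1 - xs)
    set t : ℝ := (x - xs) / (1 - xs) with ht
    have h1xs : 0 < 1 - xs := by linarith
    have ht0 : 0 < t := div_pos (by linarith) h1xs
    have ht1 : t < 1 := by
      rw [div_lt_one h1xs]; linarith
    have hxdecomp : x = (1 - t) * xs + t * 1 := by
      rw [ht]; field_simp; ring
    have hconvS : S x ≤ (1 - t) * S xs + t := by
      have hpointwise : ∀ i : ℕ, b i * x ^ (i + 1) ≤
          b i * ((1 - t) * xs ^ (i + 1) + t * 1 ^ (i + 1)) := by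
        intro i
        apply mul_le_mul_of_nonneg_left _ (hb i)
        have hconv := (convexOn_pow (i + 1)).2 (mem_Ici.2 hxs0) (mem_Ici.2 (zero_le_one))
          (by linarith : (0:ℝ) ≤ 1 - t) ht0.le (by ring)
        calc x ^ (i + 1) = ((1 - t) • xs + t • (1:ℝ)) ^ (i + 1) := by
              rw [smul_eq_mul, smul_eq_mul, ← hxdecomp]
          _ ≤ (1 - t) • xs ^ (i + 1) + t • (1:ℝ) ^ (i + 1) := hconv
          _ = (1 - t) * xs ^ (i + 1) + t * 1 ^ (i + 1) := by simp [smul_eq_mul]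
      have hrsum : Summable fun i => b i * ((1 - t) * xs ^ (i + 1) + t * 1 ^ (i + 1)) := by
        have h1 : Summable fun i => (1 - t) * (b i * xs ^ (i + 1)) :=
          (hSsum xs hxsabs).mul_left _
        have h2 : Summable fun i => t * b i := hbsummable.mul_left t
        apply (h1.add h2).congr
        intro i; simp; ring
      have := Summable.tsum_le_tsum hpointwise (hSsum x hxabs) hrsum
      have hrhs : ∑' i, b i * ((1 - t) * xs ^ (i + 1) + t * 1 ^ (i + 1))
          = (1 - t) * S xs + t := by
        have hsplit : ∀ i : ℕ, b i * ((1 - t) * xs ^ (i + 1) + t * 1 ^ (i + 1))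
            = (1 - t) * (b i * xs ^ (i + 1)) + t * b i := by
          intro i; simp; ring
        rw [tsum_congr hsplit, Summable.tsum_add (((hSsum xs hxsabs)).mul_left _) (hbsummable.mul_left t),
          tsum_mul_left, tsum_mul_left, hbsum, mul_one]
      rw [hrhs] at this
      exact this
    -- combine: φ x < 0, contradiction
    have hfinal : lam * S x + mu - (lam + mu + alpha) * x < 0 := by
      have h5 : lam * S x ≤ lam * ((1 - t) * S xs + t) :=
        mul_le_mul_of_nonneg_left hconvS hlam.le
      have h6 : (1 - t) * (lam * S xs + mu) = (1 - t) * ((lam + mu + alpha) * xs) := by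
        rw [hfix]
      have h7 : 0 < t * alpha := mul_pos ht0 halpha
      nlinarith [hxdecomp]
    linarith
  -- the real fixed point gives a complex zero
  have hSxs_eq : ((S xs : ℝ) : ℂ) = ∑' i : ℕ, (b i : ℂ) * (xs : ℂ) ^ (i + 1) := by
    rw [hS]
    rw [Complex.ofReal_tsum]
    apply tsum_congr
    intro i
    push_cast
    ring
  have hxsnorm : ‖(xs : ℂ)‖ = xs := by
    rw [Complex.norm_real, Real.norm_eq_abs, abs_of_nonneg hxs0]
  have hexists : ‖(xs : ℂ)‖ < 1 ∧
      (lam + mu + alpha) * (xs : ℂ) - lam * (xs : ℂ) * (∑' i : ℕ, (b i : ℂ) * (xs : ℂ) ^ i) - mu = 0 := by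
    constructor
    · rw [hxsnorm]; exact hxs1
    · rw [heqform (xs : ℂ) (by rw [hxsnorm]; exact hxs1), ← hSxs_eq]
      exact_mod_cast hfix.symm
  refine ⟨(xs : ℂ), hexists, ?_⟩
  -- uniqueness
  intro z hz
  obtain ⟨hz1, hz2⟩ := hz
  have heqz : (lam + mu + alpha) * z = lam * (∑' i : ℕ, (b i : ℂ) * z ^ (i + 1)) + mu :=
    (heqform z hz1).1 hz2
  have heqxs : (lam + mu + alpha) * (xs : ℂ) =
      lam * (∑' i : ℕ, (b i : ℂ) * (xs : ℂ) ^ (i + 1)) + mu :=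
    (heqform (xs : ℂ) (by rw [hxsnorm]; exact hxs1)).1 hexists.2
  have hznorm : ‖z‖ ≤ xs := hnormle z hz1 heqz
  have hxsnorm' : ‖(xs : ℂ)‖ ≤ xs := le_of_eq hxsnorm
  -- subtract the two equations
  have hdiff : ((lam + mu + alpha : ℝ) : ℂ) * (z - (xs : ℂ)) =
      lam * ∑' i : ℕ, (b i : ℂ) * (z ^ (i + 1) - (xs : ℂ) ^ (i + 1)) := by
    have hs1 := hzsum' z hz1.le
    have hs2 := hzsum' (xs : ℂ) (by rw [hxsnorm]; exact hxs1.le)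
    have hts : ∑' i : ℕ, (b i : ℂ) * (z ^ (i + 1) - (xs : ℂ) ^ (i + 1)) =
        (∑' i : ℕ, (b i : ℂ) * z ^ (i + 1)) - ∑' i : ℕ, (b i : ℂ) * (xs : ℂ) ^ (i + 1) := by
      rw [← Summable.tsum_sub hs1 hs2]
      apply tsum_congr
      intro i; ring
    rw [hts]
    push_cast
    linear_combination heqz - heqxs
  -- norm estimate
  have hnormdiff : (lam + mu + alpha) * ‖z - (xs : ℂ)‖ ≤ lam * D * ‖z - (xs : ℂ)‖ := by
    have hlhs : ‖((lam + mu + alpha : ℝ) : ℂ) * (z - (xs : ℂ))‖ =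
        (lam + mu + alpha) * ‖z - (xs : ℂ)‖ := by
      rw [norm_mul, Complex.norm_real, Real.norm_eq_abs, abs_of_pos (by linarith)]
    have hsummand : ∀ i : ℕ, ‖(b i : ℂ) * (z ^ (i + 1) - (xs : ℂ) ^ (i + 1))‖ ≤
        b i * (((i : ℝ) + 1) * xs ^ i) * ‖z - (xs : ℂ)‖ := by
      intro i
      rw [norm_mul, Complex.norm_real, Real.norm_eq_abs, abs_of_nonneg (hb i)]
      have := aux_norm_pow_sub z (xs : ℂ) xs hznorm hxsnorm' i
      calc b i * ‖z ^ (i + 1) - (xs : ℂ) ^ (i + 1)‖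
          ≤ b i * (((i : ℝ) + 1) * xs ^ i * ‖z - (xs : ℂ)‖) :=
            mul_le_mul_of_nonneg_left this (hb i)
        _ = b i * (((i : ℝ) + 1) * xs ^ i) * ‖z - (xs : ℂ)‖ := by ring
    have hrsummable : Summable fun i => b i * (((i : ℝ) + 1) * xs ^ i) * ‖z - (xs : ℂ)‖ :=
      hDsum.mul_right _
    have hnsummable : Summable fun i => ‖(b i : ℂ) * (z ^ (i + 1) - (xs : ℂ) ^ (i + 1))‖ :=
      Summable.of_nonneg_of_le (fun i => norm_nonneg _) hsummand hrsummable
    have h1 : ‖∑' i : ℕ, (b i : ℂ) * (z ^ (i + 1) - (xs : ℂ) ^ (i + 1))‖ ≤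
        ∑' i : ℕ, b i * (((i : ℝ) + 1) * xs ^ i) * ‖z - (xs : ℂ)‖ :=
      (norm_tsum_le_tsum_norm hnsummable).trans
        (Summable.tsum_le_tsum hsummand hnsummable hrsummable)
    have h2 : ∑' i : ℕ, b i * (((i : ℝ) + 1) * xs ^ i) * ‖z - (xs : ℂ)‖ =
        D * ‖z - (xs : ℂ)‖ := tsum_mul_right
    rw [h2] at h1
    calc (lam + mu + alpha) * ‖z - (xs : ℂ)‖
        = ‖((lam + mu + alpha : ℝ) : ℂ) * (z - (xs : ℂ))‖ := hlhs.symm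
      _ = ‖(lam : ℂ) * ∑' i : ℕ, (b i : ℂ) * (z ^ (i + 1) - (xs : ℂ) ^ (i + 1))‖ := by
          rw [hdiff]
      _ = lam * ‖∑' i : ℕ, (b i : ℂ) * (z ^ (i + 1) - (xs : ℂ) ^ (i + 1))‖ := by
          rw [norm_mul, Complex.norm_real, Real.norm_eq_abs, abs_of_pos hlam]
      _ ≤ lam * (D * ‖z - (xs : ℂ)‖) := mul_le_mul_of_nonneg_left h1 hlam.le
      _ = lam * D * ‖z - (xs : ℂ)‖ := by ring
  have : ‖z - (xs : ℂ)‖ = 0 := by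
    by_contra hne
    have hpos : 0 < ‖z - (xs : ℂ)‖ := lt_of_le_of_ne (norm_nonneg _) (Ne.symm hne)
    have hcontr := mul_lt_mul_of_pos_right hkey hpos
    linarith [hnormdiff, hcontr]
  exact sub_eq_zero.1 (norm_eq_zero.1 this)
end

section
/- For the M/M/c staggered setup model with single arrivals, the functions Π_i(z) = π_{i,i}(λ+α)/(λ+α−λz) with π_{i,i} = π₀₀(λ/μ)^i/i!, for i = 0,…,c−1, satisfy the balance functional equation f_i(z)Π_i(z) = α_i z π_{i,i} + (i+1)μ z π_{i+1,i+1} − iμ π_{i,i} + α(Π_{i−1}(z) − π_{i−1,i−1}) where f_i(z) = (λ+iμ+α)z − λz² − iμ. -/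
/-- For the M/M/c staggered setup model with single arrivals, the functions
`Π_i(z) = π_{i,i}(λ+α)/(λ+α−λz)` with `π_{i,i} = π₀₀(λ/μ)^i/i!` satisfy the balance
functional equation of level `i` for `1 ≤ i ≤ c−1`. -/
theorem stmt_6 (lam mu alpha p00 : ℝ) (hlam : 0 < lam) (hmu : 0 < mu) (halpha : 0 < alpha)
    (hp00 : 0 < p00) (c : ℕ) (hc : 2 ≤ c)
    (pii : ℕ → ℝ) (hpii : ∀ i, pii i = p00 * (lam / mu) ^ i / (Nat.factorial i))
    (Pi : ℕ → ℝ → ℝ)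
    (hPi : ∀ i ≤ c - 1, ∀ z : ℝ, Pi i z = pii i * (lam + alpha) / (lam + alpha - lam * z)) :
    ∀ i : ℕ, 1 ≤ i → i ≤ c - 1 → ∀ z : ℝ, |z| < 1 →
      ((lam + i * mu + alpha) * z - lam * z ^ 2 - i * mu) * Pi i z =
        alpha * z * pii i + (i + 1) * mu * z * pii (i + 1) - i * mu * pii i +
          alpha * (Pi (i - 1) z - pii (i - 1)) := by
  intro i hi1 hi2 z hz
  obtain ⟨hz1, hz2⟩ := abs_lt.mp hz
  have hD : lam + alpha - lam * z ≠ 0 := by nlinarith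
  obtain ⟨j, rfl⟩ := Nat.exists_eq_succ_of_ne_zero (by omega : i ≠ 0)
  have hfj : (Nat.factorial j : ℝ) ≠ 0 := by positivity
  rw [hPi (j + 1) hi2 z, show j + 1 - 1 = j from rfl, hPi j (by omega) z,
    hpii (j + 1 + 1), hpii (j + 1), hpii j]
  simp only [Nat.factorial_succ]
  push_cast
  field_simp
  simp only [div_pow]
  field_simp
  ring
end

section
/- M/M/c decomposition with staggered setup: with Π_i(z) = π_{i,i}(λ+α)/(λ+α−λz) for i ≤ c−1 and Π_c(z) = π_{c,c}(λ+α)/((1−ρz)(λ+α−λz)), π_{i,i} = π₀₀(λ/μ)^i/i!, and the normalization Σ_{i=0}^c Π_i(1) = 1, the total generating function satisfies Σ_{i=0}^c Π_i(z) = [α/(α+λ−λz)]·[1 − C + C(1−ρ)/(1−ρz)] where ρ = λ/(cμ) and C = Π_c(1) is the Erlang-C waiting probability. -/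
/-- M/M/c decomposition with staggered setup: with `Π_i(z) = π_{i,i}(λ+α)/(λ+α−λz)` for
`i ≤ c−1`, `Π_c(z) = π_{c,c}(λ+α)/((1−ρz)(λ+α−λz))`, `π_{i,i} = π₀₀(λ/μ)^i/i!`, and the
normalization `Σ_{i=0}^c Π_i(1) = 1`, one has
`Σ_{i=0}^c Π_i(z) = (α/(α+λ−λz))·(1 − C + C(1−ρ)/(1−ρz))` where `C = Π_c(1)`. -/
theorem stmt_11 (lam mu alpha p00 : ℝ) (hlam : 0 < lam) (hmu : 0 < mu) (halpha : 0 < alpha)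
    (hp00 : 0 < p00) (c : ℕ) (hc : 1 ≤ c) (rho : ℝ) (hrho : rho = lam / (c * mu))
    (hrho1 : rho < 1)
    (pii : ℕ → ℝ) (hpii : ∀ i, pii i = p00 * (lam / mu) ^ i / (Nat.factorial i))
    (Pi : ℕ → ℝ → ℝ)
    (hPilt : ∀ i < c, ∀ z : ℝ, Pi i z = pii i * (lam + alpha) / (lam + alpha - lam * z))
    (hPic : ∀ z : ℝ, Pi c z = pii c * (lam + alpha) / ((1 - rho * z) * (lam + alpha - lam * z)))
    (hnorm : ∑ i ∈ Finset.range (c + 1), Pi i 1 = 1) :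
    ∀ z : ℝ, |z| < 1 →
      ∑ i ∈ Finset.range (c + 1), Pi i z =
        (alpha / (alpha + lam - lam * z)) *
          (1 - Pi c 1 + Pi c 1 * (1 - rho) / (1 - rho * z)) := by
  intro z hz
  have hcpos : (0:ℝ) < c := by exact_mod_cast Nat.lt_of_lt_of_le Nat.zero_lt_one hc
  have hrhopos : 0 < rho := by rw [hrho]; positivity
  have hlz : lam * z < lam + alpha := by
    have h1 : lam * z ≤ lam * |z| := by
      calc lam * z ≤ |lam * z| := le_abs_self _
        _ = lam * |z| := by rw [abs_mul, abs_of_pos hlam]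
    nlinarith
  have hden : 0 < lam + alpha - lam * z := by linarith
  have hrz : 0 < 1 - rho * z := by
    have h1 : rho * z ≤ rho * |z| := by
      calc rho * z ≤ |rho * z| := le_abs_self _
        _ = rho * |z| := by rw [abs_mul, abs_of_pos hrhopos]
    nlinarith
  have h1r : 0 < 1 - rho := by linarith
  have hA : (0:ℝ) < lam + alpha := by linarith
  set S := ∑ i ∈ Finset.range c, pii i with hSdef
  have hsum : ∀ w : ℝ, ∑ i ∈ Finset.range c, Pi i w
      = S * ((lam + alpha) / (lam + alpha - lam * w)) := by
    intro w
    rw [hSdef, Finset.sum_mul]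
    apply Finset.sum_congr rfl
    intro i hi
    rw [hPilt i (Finset.mem_range.mp hi) w, mul_div_assoc]
  rw [Finset.sum_range_succ, hsum 1] at hnorm
  have hC : Pi c 1 = pii c * (lam + alpha) / ((1 - rho) * alpha) := by
    rw [hPic 1]; norm_num
  -- key linear relations
  have hpc : pii c * (lam + alpha) = Pi c 1 * ((1 - rho) * alpha) := by
    rw [hC]; field_simp
  have hSA : S * (lam + alpha) = alpha * (1 - Pi c 1) := by
    have he : lam + alpha - lam * 1 = alpha := by ring
    rw [he] at hnorm
    field_simp at hnorm
    linarith
  have hSval : S = alpha * (1 - Pi c 1) / (lam + alpha) := by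
    field_simp [hA.ne'] at hSA ⊢; linarith
  have hpcval : pii c = Pi c 1 * ((1 - rho) * alpha) / (lam + alpha) := by
    field_simp [hA.ne'] at hpc ⊢; linarith
  rw [Finset.sum_range_succ, hsum z, hPic z, hSval, hpcval]
  have haz : alpha + lam - lam * z ≠ 0 := fun h => hden.ne' (by linarith)
  field_simp
  ring
end
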